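/- Let ρ₁,…,ρₙ be arbitrary density matrices (possibly rank-deficient) and p a probability vector. Then for every density matrix σ: Σᵢ pᵢ F(ρᵢ, σ) ≤ √(Σ_{i,j} pᵢ pⱼ F(ρᵢ, ρⱼ)) (the Product bound). -/

import Mathlib

open Matrix BigOperators Finset ComplexOrder

variable {d n : ℕ}

open Classical in
/-- The positive semidefinite square root (zero if not PSD). -/
noncomputable def psqrt (A : Matrix (Fin d) (Fin d) ℂ) : Matrix (Fin d) (Fin d) ℂ :=
  if h : A.PosSemidef then
    h.1.eigenvectorUnitary.1 * diagonal ((↑) ∘ (√·) ∘ h.1.eigenvalues) *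
      (star h.1.eigenvectorUnitary : Matrix (Fin d) (Fin d) ℂ)
  else 0

/-- Trace norm ‖A‖₁ = Tr √(A*A). -/
noncomputable def traceNorm (A : Matrix (Fin d) (Fin d) ℂ) : ℝ :=
  ((psqrt (Aᴴ * A)).trace).re

/-- Fidelity F(ρ,σ) = Tr √(σ^{1/2} ρ σ^{1/2}). -/
noncomputable def fid (ρ σ : Matrix (Fin d) (Fin d) ℂ) : ℝ :=
  ((psqrt (psqrt σ * ρ * psqrt σ)).trace).re

/-- Density matrix: positive semidefinite with unit trace. -/
def IsDensity (ρ : Matrix (Fin d) (Fin d) ℂ) : Prop := ρ.PosSemidef ∧ ρ.trace = 1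

/-- Contraction: spectral norm at most one, i.e. 1 - UᴴU ⪰ 0. -/
def IsContraction (U : Matrix (Fin d) (Fin d) ℂ) : Prop := (1 - Uᴴ * U).PosSemidef

/-- Probability vector. -/
def IsProbVec (p : Fin n → ℝ) : Prop := (∀ i, 0 ≤ p i) ∧ ∑ i, p i = 1

open Classical in

lemma psqrt_eq {A : Matrix (Fin d) (Fin d) ℂ} (hA : A.PosSemidef) :
    psqrt A = hA.1.eigenvectorUnitary.1 * diagonal ((↑) ∘ (√·) ∘ hA.1.eigenvalues) *
      (star hA.1.eigenvectorUnitary : Matrix (Fin d) (Fin d) ℂ) := by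
  unfold psqrt; rw [dif_pos hA]

lemma psqrt_posSemidef {A : Matrix (Fin d) (Fin d) ℂ} (hA : A.PosSemidef) :
    (psqrt A).PosSemidef := by
  rw [psqrt_eq hA]
  have hD : (diagonal (((↑) ∘ (√·) ∘ hA.1.eigenvalues : Fin d → ℂ))).PosSemidef :=
    PosSemidef.diagonal fun i => by simp [Real.sqrt_nonneg]
  exact hD.mul_mul_conjTranspose_same hA.1.eigenvectorUnitary.1

lemma psqrt_mul_self {A : Matrix (Fin d) (Fin d) ℂ} (hA : A.PosSemidef) :
    psqrt A * psqrt A = A := by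
  rw [psqrt_eq hA]
  have hUU : (star hA.1.eigenvectorUnitary : Matrix (Fin d) (Fin d) ℂ) *
      hA.1.eigenvectorUnitary.1 = 1 := Unitary.coe_star_mul_self _
  have hDD : diagonal (((↑) ∘ (√·) ∘ hA.1.eigenvalues : Fin d → ℂ)) *
      diagonal (((↑) ∘ (√·) ∘ hA.1.eigenvalues : Fin d → ℂ)) =
      diagonal (RCLike.ofReal ∘ hA.1.eigenvalues) := by
    rw [diagonal_mul_diagonal]
    congr 1; funext i
    simp only [Function.comp_apply]
    rw [← Complex.ofReal_mul, Real.mul_self_sqrt (hA.eigenvalues_nonneg i)]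
    rfl
  conv_rhs => rw [hA.1.spectral_theorem]
  rw [Unitary.conjStarAlgAut_apply, ← hDD]
  simp only [Matrix.mul_assoc]
  rw [← Matrix.mul_assoc _ _ (diagonal _ * _), hUU, Matrix.one_mul]

lemma psqrt_herm {A : Matrix (Fin d) (Fin d) ℂ} (hA : A.PosSemidef) :
    (psqrt A)ᴴ = psqrt A :=
  (psqrt_posSemidef hA).1

lemma psd_trace_re_nonneg {A : Matrix (Fin d) (Fin d) ℂ} (hA : A.PosSemidef) :
    0 ≤ A.trace.re := by
  have h : ∀ i, 0 ≤ (A i i).re := by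
    intro i
    exact (Complex.le_def.mp hA.diag_nonneg).1
  rw [Matrix.trace, Complex.re_sum]
  exact Finset.sum_nonneg fun i _ => h i

lemma trace_conjTranspose_mul (B C : Matrix (Fin d) (Fin d) ℂ) :
    (Bᴴ * C).trace = ∑ i, ∑ j, star (B j i) * C j i := by
  simp [Matrix.trace, Matrix.diag, Matrix.mul_apply, Matrix.conjTranspose_apply]

lemma trace_conjTranspose_mul_self_re (B : Matrix (Fin d) (Fin d) ℂ) :
    (Bᴴ * B).trace.re = ∑ i, ∑ j, ‖B j i‖ ^ 2 := by
  rw [trace_conjTranspose_mul, Complex.re_sum]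
  refine Finset.sum_congr rfl fun i _ => ?_
  rw [Complex.re_sum]
  refine Finset.sum_congr rfl fun j _ => ?_
  simp [Complex.star_def, Complex.conj_mul', ← Complex.ofReal_pow]

lemma trace_cs (B C : Matrix (Fin d) (Fin d) ℂ) :
    ‖(Bᴴ * C).trace‖ ≤
      Real.sqrt ((Bᴴ * B).trace.re) * Real.sqrt ((Cᴴ * C).trace.re) := by
  have h1 : ‖(Bᴴ * C).trace‖ ≤
      ∑ q : Fin d × Fin d, ‖B q.2 q.1‖ * ‖C q.2 q.1‖ := by
    rw [trace_conjTranspose_mul, ← Finset.sum_product']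
    refine (norm_sum_le _ _).trans (le_of_eq ?_)
    refine Finset.sum_congr rfl fun q _ => ?_
    rw [norm_mul]
    congr 1
    exact Complex.norm_conj _
  have h2 : (∑ q : Fin d × Fin d, ‖B q.2 q.1‖ * ‖C q.2 q.1‖) ^ 2 ≤
      (∑ q : Fin d × Fin d, ‖B q.2 q.1‖ ^ 2) *
      (∑ q : Fin d × Fin d, ‖C q.2 q.1‖ ^ 2) :=
    Finset.sum_mul_sq_le_sq_mul_sq _ _ _
  have hB : (∑ q : Fin d × Fin d, ‖B q.2 q.1‖ ^ 2) = (Bᴴ * B).trace.re := by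
    rw [trace_conjTranspose_mul_self_re, ← Finset.sum_product', Finset.univ_product_univ]
  have hC : (∑ q : Fin d × Fin d, ‖C q.2 q.1‖ ^ 2) = (Cᴴ * C).trace.re := by
    rw [trace_conjTranspose_mul_self_re, ← Finset.sum_product', Finset.univ_product_univ]
  rw [hB, hC] at h2
  have hs : (0:ℝ) ≤ ∑ q : Fin d × Fin d, ‖B q.2 q.1‖ * ‖C q.2 q.1‖ :=
    Finset.sum_nonneg fun q _ => mul_nonneg (norm_nonneg _) (norm_nonneg _)
  calc ‖(Bᴴ * C).trace‖ ≤ _ := h1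
    _ = Real.sqrt ((∑ q : Fin d × Fin d,
          ‖B q.2 q.1‖ * ‖C q.2 q.1‖) ^ 2) := (Real.sqrt_sq hs).symm
    _ ≤ Real.sqrt ((Bᴴ * B).trace.re * (Cᴴ * C).trace.re) := Real.sqrt_le_sqrt h2
    _ = _ := Real.sqrt_mul (by
          rw [← hB]; exact Finset.sum_nonneg fun q _ => sq_nonneg _) _

lemma toEuclideanLin_mul (M N : Matrix (Fin d) (Fin d) ℂ) (x : EuclideanSpace ℂ (Fin d)) :
    Matrix.toEuclideanLin (M * N) x = Matrix.toEuclideanLin M (Matrix.toEuclideanLin N x) := by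
  simp [Matrix.toEuclideanLin_apply, Matrix.mulVec_mulVec]

lemma toEuclideanLin_one (x : EuclideanSpace ℂ (Fin d)) :
    Matrix.toEuclideanLin (1 : Matrix (Fin d) (Fin d) ℂ) x = x := by
  simp [Matrix.toEuclideanLin_apply, Matrix.one_mulVec]

lemma exists_polar (A : Matrix (Fin d) (Fin d) ℂ) :
    ∃ U : Matrix (Fin d) (Fin d) ℂ, Uᴴ * U = 1 ∧ A = U * psqrt (Aᴴ * A) := by
  have hAA : (Aᴴ * A).PosSemidef := Matrix.posSemidef_conjTranspose_mul_self A
  set P := psqrt (Aᴴ * A) with hPdef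
  have hP : P.PosSemidef := psqrt_posSemidef hAA
  have hPP : P * P = Aᴴ * A := psqrt_mul_self hAA
  have hPh : Pᴴ = P := hP.1
  set a := Matrix.toEuclideanLin A with ha
  set q := Matrix.toEuclideanLin P with hq
  have hinner : ∀ x : EuclideanSpace ℂ (Fin d),
      (inner ℂ (a x) (a x) : ℂ) = inner ℂ (q x) (q x) := by
    intro x
    have h1 : (inner ℂ (a x) (a x) : ℂ) = inner ℂ x (Matrix.toEuclideanLin (Aᴴ * A) x) := by
      rw [toEuclideanLin_mul, Matrix.toEuclideanLin_conjTranspose_eq_adjoint,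
        LinearMap.adjoint_inner_right]
    have hqq : Matrix.toEuclideanLin (Aᴴ * A) x = q (q x) := by
      rw [← hPP, toEuclideanLin_mul]
    have hadj : LinearMap.adjoint q = q := by
      rw [hq, ← Matrix.toEuclideanLin_conjTranspose_eq_adjoint, hPh]
    have h2 : (inner ℂ (q x) (q x) : ℂ) = inner ℂ x (Matrix.toEuclideanLin (Aᴴ * A) x) := by
      calc (inner ℂ (q x) (q x) : ℂ)
          = inner ℂ x ((LinearMap.adjoint q) (q x)) :=
            (LinearMap.adjoint_inner_right q _ _).symm
        _ = inner ℂ x (q (q x)) := by rw [hadj]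
        _ = inner ℂ x (Matrix.toEuclideanLin (Aᴴ * A) x) := by rw [hqq]
    rw [h1, h2]
  have norm_eq : ∀ x : EuclideanSpace ℂ (Fin d), ‖a x‖ = ‖q x‖ := by
    intro x
    rw [@norm_eq_sqrt_re_inner ℂ, @norm_eq_sqrt_re_inner ℂ, hinner]
  have hker : LinearMap.ker q ≤ LinearMap.ker a := by
    intro x hx
    rw [LinearMap.mem_ker] at hx ⊢
    have : ‖a x‖ = 0 := by rw [norm_eq, hx, norm_zero]
    exact norm_eq_zero.mp this
  set L0 : LinearMap.range q →ₗ[ℂ] EuclideanSpace ℂ (Fin d) :=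
    (Submodule.liftQ (LinearMap.ker q) a hker) ∘ₗ
      (LinearMap.quotKerEquivRange q).symm.toLinearMap with hL0def
  have hL0 : ∀ x, L0 ⟨q x, LinearMap.mem_range_self q x⟩ = a x := by
    intro x
    show (Submodule.liftQ _ a hker) ((LinearMap.quotKerEquivRange q).symm ⟨q x, _⟩) = a x
    rw [LinearMap.quotKerEquivRange_symm_apply_image, Submodule.mkQ_apply,
      Submodule.liftQ_apply]
  have hL0norm : ∀ s : LinearMap.range q, ‖L0 s‖ = ‖s‖ := by
    rintro ⟨y, x, rfl⟩
    rw [show (⟨q x, ⟨x, rfl⟩⟩ : LinearMap.range q) = ⟨q x, LinearMap.mem_range_self q x⟩ from rfl,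
      hL0 x]
    exact norm_eq x
  set L : LinearMap.range q →ₗᵢ[ℂ] EuclideanSpace ℂ (Fin d) := ⟨L0, hL0norm⟩ with hLdef
  set U' := L.extend with hU'def
  have hU' : ∀ x, U' (q x) = a x := by
    intro x
    have h := L.extend_apply ⟨q x, LinearMap.mem_range_self q x⟩
    rw [← hU'def] at h
    exact h.trans (hL0 x)
  set U := Matrix.toEuclideanLin.symm U'.toLinearMap with hUdef
  have htU : Matrix.toEuclideanLin U = U'.toLinearMap :=
    Matrix.toEuclideanLin.apply_symm_apply _
  refine ⟨U, ?_, ?_⟩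
  · apply Matrix.toEuclideanLin.injective
    apply LinearMap.ext; intro x
    apply ext_inner_left ℂ; intro y
    rw [toEuclideanLin_mul, Matrix.toEuclideanLin_conjTranspose_eq_adjoint,
      LinearMap.adjoint_inner_right, htU, toEuclideanLin_one]
    exact U'.inner_map_map y x
  · apply Matrix.toEuclideanLin.injective
    apply LinearMap.ext; intro x
    rw [toEuclideanLin_mul, htU, ← hq, ← ha]
    exact (hU' x).symm


lemma re_trace_mul_le (A W : Matrix (Fin d) (Fin d) ℂ) (hW : Wᴴ * W = 1) :
    ((A * W).trace).re ≤ traceNorm A := by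
  obtain ⟨U, hUU, hA⟩ := exists_polar A
  have hAA : (Aᴴ * A).PosSemidef := Matrix.posSemidef_conjTranspose_mul_self A
  set P := psqrt (Aᴴ * A) with hPdef
  have hP : P.PosSemidef := psqrt_posSemidef hAA
  set W' := W * U with hW'def
  have hW' : W'ᴴ * W' = 1 := by
    rw [hW'def, Matrix.conjTranspose_mul, Matrix.mul_assoc, ← Matrix.mul_assoc Wᴴ W U,
      hW, Matrix.one_mul, hUU]
  have hW'2 : W' * W'ᴴ = 1 := mul_eq_one_comm.mp hW'
  have htr : (A * W).trace = (P * W').trace := by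
    rw [hA, Matrix.mul_assoc, Matrix.trace_mul_comm, Matrix.mul_assoc]
  set Q := psqrt P with hQdef
  have hQ : Q.PosSemidef := psqrt_posSemidef hP
  have hQQ : Q * Q = P := psqrt_mul_self hP
  have hQh : Qᴴ = Q := hQ.1
  have key : ‖(P * W').trace‖ ≤ P.trace.re := by
    have h1 : P * W' = Qᴴ * (Q * W') := by rw [hQh, ← Matrix.mul_assoc Q Q W', hQQ]
    have e1 : Qᴴ * Q = P := by rw [hQh, hQQ]
    have e2 : ((Q * W')ᴴ * (Q * W')).trace = P.trace := by
      have : (Q * W')ᴴ * (Q * W') = W'ᴴ * (P * W') := by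
        rw [Matrix.conjTranspose_mul, hQh, ← hQQ]
        simp only [Matrix.mul_assoc]
      rw [this, Matrix.trace_mul_comm, Matrix.mul_assoc, hW'2, Matrix.mul_one]
    have hcs := trace_cs Q (Q * W')
    rw [e1, e2] at hcs
    rw [h1]
    calc ‖(Qᴴ * (Q * W')).trace‖
        ≤ Real.sqrt P.trace.re * Real.sqrt P.trace.re := hcs
      _ = P.trace.re := Real.mul_self_sqrt (psd_trace_re_nonneg hP)
  calc ((A * W).trace).re ≤ ‖(A * W).trace‖ := Complex.re_le_norm _
    _ = ‖(P * W').trace‖ := by rw [htr]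
    _ ≤ P.trace.re := key

/-- Product bound: for an arbitrary ensemble of density matrices, the average fidelity of
any density matrix is at most √(Σ_{i,j} pᵢpⱼ F(ρᵢ,ρⱼ)). -/
theorem product_bound (ρ : Fin n → Matrix (Fin d) (Fin d) ℂ) (p : Fin n → ℝ)
    (hρ : ∀ i, IsDensity (ρ i)) (hp : IsProbVec p)
    (σ : Matrix (Fin d) (Fin d) ℂ) (hσ : IsDensity σ) :
    ∑ i, p i * fid (ρ i) σ ≤
      Real.sqrt (∑ i, ∑ j, p i * p j * fid (ρ i) (ρ j)) := by
  obtain ⟨hpnn, hpsum⟩ := hp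
  set t := psqrt σ with htdef
  have ht : t.PosSemidef := psqrt_posSemidef hσ.1
  have htt : t * t = σ := psqrt_mul_self hσ.1
  have hth : tᴴ = t := ht.1
  set s : Fin n → Matrix (Fin d) (Fin d) ℂ := fun i => psqrt (ρ i) with hsdef
  have hsP : ∀ i, (s i).PosSemidef := fun i => psqrt_posSemidef (hρ i).1
  have hss : ∀ i, s i * s i = ρ i := fun i => psqrt_mul_self (hρ i).1
  have hsh : ∀ i, (s i)ᴴ = s i := fun i => (hsP i).1
  have key : ∀ i, ((s i * t)ᴴ * (s i * t)) = t * ρ i * t := by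
    intro i
    rw [Matrix.conjTranspose_mul, hsh, hth, Matrix.mul_assoc,
      ← Matrix.mul_assoc (s i) (s i) t, hss, ← Matrix.mul_assoc]
  choose U hUU hpolar using fun i => exists_polar (s i * t)
  have hU2 : ∀ i, U i * (U i)ᴴ = 1 := fun i => mul_eq_one_comm.mp (hUU i)
  have hfid : ∀ i, fid (ρ i) σ = ((psqrt ((s i * t)ᴴ * (s i * t))).trace).re := by
    intro i
    unfold fid
    rw [key i]
  have htrace : ∀ i, (t * ((U i)ᴴ * s i)).trace
      = (psqrt ((s i * t)ᴴ * (s i * t))).trace := by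
    intro i
    have h1 : (t * ((U i)ᴴ * s i)).trace = ((U i)ᴴ * (s i * t)).trace := by
      rw [Matrix.trace_mul_comm, Matrix.mul_assoc]
    rw [h1]
    conv_lhs => rw [hpolar i]
    rw [← Matrix.mul_assoc, hUU i, Matrix.one_mul]
  set X : Matrix (Fin d) (Fin d) ℂ := ∑ i, (p i : ℂ) • ((U i)ᴴ * s i) with hXdef
  -- LHS equals re trace (tᴴ * X)
  have hLHS : ∑ i, p i * fid (ρ i) σ = ((tᴴ * X).trace).re := by
    rw [hth, hXdef, Finset.mul_sum]
    simp_rw [Matrix.mul_smul, ← Matrix.mul_assoc]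
    rw [Matrix.trace_sum, Complex.re_sum]
    refine Finset.sum_congr rfl fun i _ => ?_
    rw [hfid i, ← htrace i, Matrix.trace_smul, Matrix.mul_assoc]
    simp [Complex.mul_re]
  -- Xᴴ
  have hXh : Xᴴ = ∑ i, (p i : ℂ) • (s i * U i) := by
    rw [hXdef, Matrix.conjTranspose_sum]
    refine Finset.sum_congr rfl fun i _ => ?_
    rw [Matrix.conjTranspose_smul, Matrix.conjTranspose_mul, hsh, Matrix.conjTranspose_conjTranspose]
    congr 1
    simp [Complex.star_def, Complex.conj_ofReal]
  -- trace (Xᴴ X) bound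
  have hXX : ((Xᴴ * X).trace).re ≤ ∑ i, ∑ j, p i * p j * fid (ρ j) (ρ i) := by
    rw [hXh, hXdef, Finset.sum_mul_sum]
    simp_rw [Matrix.smul_mul, Matrix.mul_smul, smul_smul]
    rw [Matrix.trace_sum, Complex.re_sum]
    refine Finset.sum_le_sum fun i _ => ?_
    rw [Matrix.trace_sum, Complex.re_sum]
    refine Finset.sum_le_sum fun j _ => ?_
    rw [Matrix.trace_smul]
    have hterm : (((s i * U i) * ((U j)ᴴ * s j)).trace).re ≤ fid (ρ j) (ρ i) := by
      have hcyc : ((s i * U i) * ((U j)ᴴ * s j)).trace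
          = ((s j * s i) * (U i * (U j)ᴴ)).trace := by
        have e : (s i * U i) * ((U j)ᴴ * s j) = (s i * U i * (U j)ᴴ) * s j := by
          simp only [Matrix.mul_assoc]
        rw [e, Matrix.trace_mul_comm]
        congr 1
        simp only [Matrix.mul_assoc]
      have hWU : (U i * (U j)ᴴ)ᴴ * (U i * (U j)ᴴ) = 1 := by
        rw [Matrix.conjTranspose_mul, Matrix.conjTranspose_conjTranspose,
          Matrix.mul_assoc, ← Matrix.mul_assoc (U i)ᴴ (U i) (U j)ᴴ, hUU i,
          Matrix.one_mul, hU2 j]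
      have hbd := re_trace_mul_le (s j * s i) (U i * (U j)ᴴ) hWU
      have hTN : traceNorm (s j * s i) = fid (ρ j) (ρ i) := by
        unfold traceNorm fid
        congr 2
        rw [Matrix.conjTranspose_mul, hsh, hsh, Matrix.mul_assoc,
          ← Matrix.mul_assoc (s j) (s j) (s i), hss, ← Matrix.mul_assoc]
      rw [hcyc]
      rw [hTN] at hbd
      exact hbd
    have hre : (((p i : ℂ) * (p j : ℂ)) • ((s i * U i) * ((U j)ᴴ * s j)).trace).re
        = (p i * p j) * (((s i * U i) * ((U j)ᴴ * s j)).trace).re := by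
      rw [← Complex.ofReal_mul]
      simp [Complex.mul_re]
    rw [hre]
    exact mul_le_mul_of_nonneg_left hterm (mul_nonneg (hpnn i) (hpnn j))
  -- Cauchy-Schwarz
  have hcs := trace_cs t X
  have hσtr : ((tᴴ * t).trace).re = 1 := by
    rw [hth, htt, hσ.2]
    simp
  rw [hσtr, Real.sqrt_one, one_mul] at hcs
  have hfinal : ∑ i, ∑ j, p i * p j * fid (ρ j) (ρ i)
      = ∑ i, ∑ j, p i * p j * fid (ρ i) (ρ j) := by
    rw [Finset.sum_comm]
    refine Finset.sum_congr rfl fun i _ => Finset.sum_congr rfl fun j _ => ?_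
    rw [mul_comm (p j) (p i)]
  calc ∑ i, p i * fid (ρ i) σ = ((tᴴ * X).trace).re := hLHS
    _ ≤ ‖(tᴴ * X).trace‖ := Complex.re_le_norm _
    _ ≤ Real.sqrt (((Xᴴ * X).trace).re) := hcs
    _ ≤ Real.sqrt (∑ i, ∑ j, p i * p j * fid (ρ j) (ρ i)) := Real.sqrt_le_sqrt hXX
    _ = Real.sqrt (∑ i, ∑ j, p i * p j * fid (ρ i) (ρ j)) := by rw [hfinal]
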